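/- For integers k ≥ 2 and l ≥ 1, s(l,k)/(l-1)! = (1/(k-1)!) ∫_{[0,1]^{k-1}} G_l(z₁,…,z_{k-1}) dz₁⋯dz_{k-1}, where G_l(z₁,…,z_{k-1}) = ∏_{j=1}^{k-1} 1/(1-z_j) + ∑_{a=1}^{k-1} (z_a^{l-1}/(z_a - 1)) ∏_{j≠a} 1/(z_a - z_j) and s(l,k) is the unsigned Stirling number of the first kind. -/

import Mathlib

open MeasureTheory Finset

/-- Unsigned Stirling numbers of the first kind. -/
def stirling1 : ℕ → ℕ → ℕ
  | 0, 0 => 1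
  | 0, _ + 1 => 0
  | _ + 1, 0 => 0
  | n + 1, j + 1 => stirling1 n j + n * stirling1 n (j + 1)

/-- `G_l(z₁,…,z_{k-1}) = ∏_j 1/(1-z_j) + ∑_a z_a^{l-1}/(z_a-1) ∏_{j≠a} 1/(z_a-z_j)`. -/
noncomputable def Gfun (l : ℕ) {d : ℕ} (z : Fin d → ℝ) : ℝ :=
  (∏ j : Fin d, 1 / (1 - z j)) +
    ∑ a : Fin d, (z a) ^ (l - 1) / (z a - 1) *
      ∏ j ∈ Finset.univ.erase a, 1 / (z a - z j)

/-! ### Stirling number lemmas -/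

lemma stirling1_zero_right (l : ℕ) (hl : 1 ≤ l) : stirling1 l 0 = 0 := by
  obtain ⟨m, rfl⟩ : ∃ m, l = m + 1 := ⟨l - 1, by omega⟩
  rfl

lemma stirling1_eq_zero_of_lt : ∀ l k : ℕ, l < k → stirling1 l k = 0 := by
  intro l
  induction l with
  | zero => intro k hk; obtain ⟨m, rfl⟩ : ∃ m, k = m + 1 := ⟨k - 1, by omega⟩; rfl
  | succ n ih =>
      intro k hk
      obtain ⟨m, rfl⟩ : ∃ m, k = m + 1 := ⟨k - 1, by omega⟩
      show stirling1 n m + n * stirling1 n (m + 1) = 0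
      rw [ih m (by omega), ih (m + 1) (by omega)]
      ring

lemma stirling1_one_right : ∀ l : ℕ, 1 ≤ l → stirling1 l 1 = (l - 1).factorial := by
  intro l
  induction l with
  | zero => omega
  | succ n ih =>
      intro _
      show stirling1 n 0 + n * stirling1 n 1 = n.factorial
      rcases Nat.eq_zero_or_pos n with hn | hn
      · subst hn; rfl
      · rw [stirling1_zero_right n hn, ih hn]
        obtain ⟨m, rfl⟩ : ∃ m, n = m + 1 := ⟨n - 1, by omega⟩
        simp [Nat.factorial_succ]

section Core

variable {d : ℕ}

/-- Generic sum over `piAntidiag`. -/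
noncomputable def MM (f : Fin d → ℕ → ℝ) (u : Finset (Fin d)) (n : ℕ) : ℝ :=
  ∑ c ∈ u.piAntidiag n, ∏ j ∈ u, f j (c j)

lemma MM_zero (f : Fin d → ℕ → ℝ) (u : Finset (Fin d)) (hf : ∀ j ∈ u, f j 0 = 1) :
    MM f u 0 = 1 := by
  rw [MM, piAntidiag_zero, Finset.sum_singleton]
  exact Finset.prod_eq_one fun j hj => hf j hj

lemma consErase {i : Fin d} {s : Finset (Fin d)} (hi : i ∈ s) :
    Finset.cons i (s.erase i) (Finset.notMem_erase i s) = s := by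
  rw [Finset.cons_eq_insert]; exact Finset.insert_erase hi

lemma MM_cons (f : Fin d → ℕ → ℝ) {i : Fin d} {s : Finset (Fin d)} (hi : i ∉ s) (n : ℕ) :
    MM f (Finset.cons i s hi) n =
      ∑ p ∈ Finset.HasAntidiagonal.antidiagonal n, f i p.1 * MM f s p.2 := by
  rw [MM, Finset.piAntidiag_cons, Finset.sum_disjiUnion]
  refine Finset.sum_congr rfl fun p hp => ?_
  rw [Finset.sum_map, MM, Finset.mul_sum]
  refine Finset.sum_congr rfl fun c hc => ?_
  have hc0 : c i = 0 := by
    by_contra h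
    exact hi ((Finset.mem_piAntidiag.1 hc).2 i h)
  rw [Finset.prod_cons]
  simp only [addRightEmbedding_apply]
  congr 1
  · simp [Pi.add_apply, hc0]
  · refine Finset.prod_congr rfl fun j hj => ?_
    have : j ≠ i := fun h => hi (h ▸ hj)
    simp [Pi.add_apply, this]

end Core

section Comb

variable {d : ℕ}

noncomputable def Av (u : Finset (Fin d)) (n : ℕ) : ℝ :=
  MM (fun _ a => 1 / ((a : ℝ) + 1)) u n

noncomputable def Bv (u : Finset (Fin d)) (m : ℕ) : ℝ :=
  ∑ n ∈ Finset.range m, Av u n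

lemma Av_empty_zero : Av (∅ : Finset (Fin d)) 0 = 1 :=
  MM_zero _ _ (by simp)

lemma Av_empty_succ (n : ℕ) : Av (∅ : Finset (Fin d)) (n + 1) = 0 := by
  rw [Av, MM, piAntidiag_empty_of_ne_zero (by omega)]
  simp

lemma sum_erase_eq_Bv {i : Fin d} {s : Finset (Fin d)} (hi : i ∈ s) (n : ℕ) :
    ∑ c ∈ s.piAntidiag n, ∏ j ∈ s.erase i, (1 : ℝ) / ((c j : ℝ) + 1)
      = Bv (s.erase i) (n + 1) := by
  classical
  set f : Fin d → ℕ → ℝ :=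
    Function.update (fun _ : Fin d => fun a : ℕ => 1 / ((a : ℝ) + 1)) i (fun _ => 1) with hf
  have hfi : ∀ a, f i a = 1 := fun a => by simp [hf]
  have hfj : ∀ j, j ≠ i → ∀ a, f j a = 1 / ((a : ℝ) + 1) := fun j hj a => by
    simp [hf, Function.update_of_ne hj]
  have h1 : ∑ c ∈ s.piAntidiag n, ∏ j ∈ s.erase i, (1 : ℝ) / ((c j : ℝ) + 1)
      = MM f (Finset.cons i (s.erase i) (Finset.notMem_erase i s)) n := by
    rw [MM, consErase hi]
    refine Finset.sum_congr rfl fun c hc => ?_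
    rw [← Finset.mul_prod_erase s _ hi, hfi, one_mul]
    exact Finset.prod_congr rfl fun j hj =>
      (hfj j (Finset.ne_of_mem_erase hj) (c j)).symm
  rw [h1, MM_cons]
  have h2 : ∀ p : ℕ × ℕ, f i p.1 * MM f (s.erase i) p.2 = Av (s.erase i) p.2 := by
    intro p
    rw [hfi, one_mul, MM, Av, MM]
    refine Finset.sum_congr rfl fun c hc => Finset.prod_congr rfl fun j hj => ?_
    exact hfj j (Finset.ne_of_mem_erase hj) (c j)
  rw [Finset.sum_congr rfl fun p _ => h2 p]
  rw [Finset.Nat.sum_antidiagonal_eq_sum_range_succ_mk]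
  rw [Bv, ← Finset.sum_range_reflect]
  refine Finset.sum_congr rfl fun k hk => ?_
  have hk' := Finset.mem_range.1 hk
  congr 1
  show n - (n.succ - 1 - k) = k
  omega

lemma Av_symm {s : Finset (Fin d)} (n : ℕ) :
    ((n : ℝ) + s.card) * Av s n = ∑ i ∈ s, Bv (s.erase i) (n + 1) := by
  classical
  rw [Av, MM, Finset.mul_sum]
  have key : ∀ c ∈ s.piAntidiag n,
      ((n : ℝ) + s.card) * ∏ j ∈ s, (1 : ℝ) / ((c j : ℝ) + 1)
        = ∑ i ∈ s, ∏ j ∈ s.erase i, (1 : ℝ) / ((c j : ℝ) + 1) := by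
    intro c hc
    have hsum : ∑ i ∈ s, c i = n := (Finset.mem_piAntidiag.1 hc).1
    have hcast : ((n : ℝ) + s.card) = ∑ i ∈ s, ((c i : ℝ) + 1) := by
      rw [Finset.sum_add_distrib, Finset.sum_const, nsmul_eq_mul, mul_one]
      have hc2 : (∑ i ∈ s, ((c i : ℕ) : ℝ)) = (n : ℝ) := by
        rw [← Nat.cast_sum, hsum]
      rw [hc2]
    rw [hcast, Finset.sum_mul]
    refine Finset.sum_congr rfl fun i hi => ?_
    rw [← Finset.mul_prod_erase s _ hi, ← mul_assoc]
    have hne : ((c i : ℝ) + 1) ≠ 0 := by positivity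
    rw [mul_one_div, div_self hne, one_mul]
  rw [Finset.sum_congr rfl key, Finset.sum_comm]
  exact Finset.sum_congr rfl fun i hi => sum_erase_eq_Bv hi n

lemma comb_main : ∀ l : ℕ, 1 ≤ l → ∀ s : Finset (Fin d),
    ((l - 1).factorial : ℝ) * Bv s (l - s.card)
      = (s.card.factorial : ℝ) * (stirling1 l (s.card + 1) : ℝ) := by
  intro l
  induction l with
  | zero => omega
  | succ l ih =>
    intro _ s
    rcases Nat.eq_zero_or_pos l with rfl | hl
    · -- l + 1 = 1
      rcases s.eq_empty_or_nonempty with rfl | hs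
      · rw [Finset.card_empty, show (1:ℕ) - 0 = 1 from rfl, Bv, Finset.sum_range_one,
          Av_empty_zero, show stirling1 1 (0 + 1) = 1 from rfl,
          show (1:ℕ) - 1 = 0 from rfl, Nat.factorial_zero]
        norm_num
      · have hc : 1 ≤ s.card := Finset.card_pos.2 hs
        rw [show 1 - s.card = 0 by omega]
        rw [stirling1_eq_zero_of_lt 1 (s.card + 1) (by omega), Bv, Finset.sum_range_zero]
        norm_num
    · -- l ≥ 1, prove for l + 1
      simp only [Nat.add_sub_cancel]
      have hfac : ((l).factorial : ℝ) = (l : ℝ) * ((l - 1).factorial : ℝ) := by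
        obtain ⟨m, rfl⟩ : ∃ m, l = m + 1 := ⟨l - 1, by omega⟩
        push_cast [Nat.factorial_succ]
        ring
      have hst : stirling1 (l + 1) (s.card + 1)
          = stirling1 l s.card + l * stirling1 l (s.card + 1) := rfl
      rcases s.eq_empty_or_nonempty with rfl | hs
      · -- empty case
        have hB : Bv (∅ : Finset (Fin d)) (l + 1 - 0) = 1 := by
          rw [Bv]
          rw [show l + 1 - 0 = l + 1 from rfl]
          rw [Finset.sum_range_succ']
          rw [Av_empty_zero]
          simp [Av_empty_succ]
        simp only [Finset.card_empty]
        rw [Finset.card_empty] at hst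
        rw [hB, hst, stirling1_zero_right l hl, stirling1_one_right l hl]
        rw [hfac]
        push_cast [Nat.factorial_zero]
        ring
      · have hc : 1 ≤ s.card := Finset.card_pos.2 hs
        by_cases hcl : l < s.card
        · rw [show l + 1 - s.card = 0 by omega, hst,
            stirling1_eq_zero_of_lt l s.card hcl,
            stirling1_eq_zero_of_lt l (s.card + 1) (by omega), Bv, Finset.sum_range_zero]
          norm_num
        · push_neg at hcl
          -- s.card ≤ l
          have hsplit : Bv s (l + 1 - s.card) = Bv s (l - s.card) + Av s (l - s.card) := by
            rw [show l + 1 - s.card = (l - s.card) + 1 by omega, Bv, Bv,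
              Finset.sum_range_succ]
          have piece1 : ((l).factorial : ℝ) * Bv s (l - s.card)
              = (l : ℝ) * ((s.card.factorial : ℝ) * (stirling1 l (s.card + 1) : ℝ)) := by
            rw [hfac, mul_assoc, ih hl s]
          have piece2 : ((l).factorial : ℝ) * Av s (l - s.card)
              = (s.card.factorial : ℝ) * (stirling1 l s.card : ℝ) := by
            have hsym := Av_symm (s := s) (l - s.card)
            have hn : ((l - s.card : ℕ) : ℝ) + (s.card : ℝ) = (l : ℝ) := by
              push_cast [Nat.cast_sub hcl]; ring
            rw [hn] at hsym
            have hIH : ∀ i ∈ s, ((l - 1).factorial : ℝ) * Bv (s.erase i) (l - s.card + 1)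
                = (((s.card - 1).factorial : ℕ) : ℝ) * (stirling1 l s.card : ℝ) := by
              intro i hi
              have hce : (s.erase i).card = s.card - 1 := Finset.card_erase_of_mem hi
              have := ih hl (s.erase i)
              rw [hce] at this
              rw [show l - (s.card - 1) = l - s.card + 1 by omega] at this
              rw [show s.card - 1 + 1 = s.card by omega] at this
              exact this
            have hfc : (s.card.factorial : ℝ) = (s.card : ℝ) * (((s.card - 1).factorial : ℕ) : ℝ) := by
              obtain ⟨m, hm⟩ : ∃ m, s.card = m + 1 := ⟨s.card - 1, by omega⟩
              rw [hm]
              push_cast [Nat.factorial_succ]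
              ring
            calc ((l).factorial : ℝ) * Av s (l - s.card)
                = ((l - 1).factorial : ℝ) * ((l : ℝ) * Av s (l - s.card)) := by
                  rw [hfac]; ring
              _ = ((l - 1).factorial : ℝ) * ∑ i ∈ s, Bv (s.erase i) (l - s.card + 1) := by
                  rw [hsym]
              _ = ∑ i ∈ s, ((l - 1).factorial : ℝ) * Bv (s.erase i) (l - s.card + 1) := by
                  rw [Finset.mul_sum]
              _ = ∑ i ∈ s, (((s.card - 1).factorial : ℕ) : ℝ) * (stirling1 l s.card : ℝ) := by
                  exact Finset.sum_congr rfl hIH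
              _ = (s.card : ℝ) * ((((s.card - 1).factorial : ℕ) : ℝ) * (stirling1 l s.card : ℝ)) := by
                  rw [Finset.sum_const, nsmul_eq_mul]
              _ = (s.card.factorial : ℝ) * (stirling1 l s.card : ℝ) := by
                  rw [hfc]; ring
          rw [hsplit, mul_add, piece1, piece2, hst]
          push_cast
          ring

end Comb


section Alg

variable {d : ℕ} {z : Fin d → ℝ}

noncomputable def Qv (z : Fin d → ℝ) (u : Finset (Fin d)) (n : ℕ) : ℝ :=
  MM (fun j a => z j ^ a) u n

noncomputable def Pv (z : Fin d → ℝ) (u : Finset (Fin d)) (m : ℕ) : ℝ :=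
  ∑ n ∈ Finset.range (m + 1), Qv z u n

noncomputable def Gz (z : Fin d → ℝ) (t : Finset (Fin d)) (N : ℕ) : ℝ :=
  (∏ j ∈ t, 1 / (1 - z j)) +
    ∑ a ∈ t, z a ^ N / (z a - 1) * ∏ j ∈ t.erase a, 1 / (z a - z j)

lemma Qv_zero (u : Finset (Fin d)) : Qv z u 0 = 1 :=
  MM_zero _ _ (by simp)

lemma Qv_empty_succ (n : ℕ) : Qv z (∅ : Finset (Fin d)) (n + 1) = 0 := by
  rw [Qv, MM, piAntidiag_empty_of_ne_zero (by omega)]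
  simp

lemma Pv_empty (m : ℕ) : Pv z (∅ : Finset (Fin d)) m = 1 := by
  rw [Pv, Finset.sum_range_succ']
  rw [Qv_zero]
  simp [Qv_empty_succ]

lemma Qv_cons {i : Fin d} {s : Finset (Fin d)} (hi : i ∉ s) (n : ℕ) :
    Qv z (Finset.cons i s hi) n = ∑ p ∈ Finset.HasAntidiagonal.antidiagonal n, z i ^ p.1 * Qv z s p.2 :=
  MM_cons _ hi n

lemma Qv_cons_succ {i : Fin d} {s : Finset (Fin d)} (hi : i ∉ s) (n : ℕ) :
    Qv z (Finset.cons i s hi) (n + 1)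
      = Qv z s (n + 1) + z i * Qv z (Finset.cons i s hi) n := by
  rw [Qv_cons hi (n + 1), Finset.Nat.sum_antidiagonal_succ]
  rw [pow_zero, one_mul]
  congr 1
  rw [Qv_cons hi n, Finset.mul_sum]
  refine Finset.sum_congr rfl fun p hp => ?_
  rw [pow_succ']
  ring

lemma Pv_cons_succ {i : Fin d} {s : Finset (Fin d)} (hi : i ∉ s) (m : ℕ) :
    Pv z (Finset.cons i s hi) (m + 1)
      = z i * Pv z (Finset.cons i s hi) m + Pv z s (m + 1) := by
  rw [Pv, Finset.sum_range_succ']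
  have h1 : ∀ n, Qv z (Finset.cons i s hi) (n + 1)
      = Qv z s (n + 1) + z i * Qv z (Finset.cons i s hi) n := fun n => Qv_cons_succ hi n
  rw [Finset.sum_congr rfl fun n _ => h1 n, Finset.sum_add_distrib]
  have h2 : ∑ n ∈ Finset.range (m + 1), z i * Qv z (Finset.cons i s hi) n
      = z i * Pv z (Finset.cons i s hi) m := by
    rw [Pv, Finset.mul_sum]
  have h3 : ∑ n ∈ Finset.range (m + 1), Qv z s (n + 1)
      = Pv z s (m + 1) - Qv z s 0 := by
    rw [Pv, Finset.sum_range_succ' (fun n => Qv z s n) (m + 1)]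
    ring
  rw [h2, h3, Qv_zero, Qv_zero]
  ring

/-- key cancellation helper -/
lemma helper1 (hinj : Function.Injective z) {t : Finset (Fin d)} {i : Fin d}
    (hi : i ∈ t) (N : ℕ) (w : Fin d → ℝ) :
    ∑ a ∈ t, (z a - z i) * (w a / (z a - 1) * ∏ j ∈ t.erase a, 1 / (z a - z j))
      = ∑ a ∈ t.erase i, w a / (z a - 1) * ∏ j ∈ (t.erase i).erase a, 1 / (z a - z j) := by
  classical
  rw [← Finset.add_sum_erase _ _ hi]
  rw [sub_self, zero_mul, zero_add]
  refine Finset.sum_congr rfl fun a ha => ?_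
  have hai : a ≠ i := Finset.ne_of_mem_erase ha
  have hat : a ∈ t := Finset.mem_of_mem_erase ha
  have hit : i ∈ t.erase a := Finset.mem_erase.2 ⟨hai.symm, hi⟩
  rw [← Finset.mul_prod_erase (t.erase a) _ hit]
  have hcomm : (t.erase a).erase i = (t.erase i).erase a := by
    ext x; simp only [Finset.mem_erase]; tauto
  rw [hcomm]
  have hne : z a - z i ≠ 0 := sub_ne_zero.2 fun h => hai (hinj h)
  rw [one_div]
  rw [show (z a - z i) * (w a / (z a - 1) * ((z a - z i)⁻¹ *
      ∏ j ∈ (t.erase i).erase a, 1 / (z a - z j)))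
    = ((z a - z i) * (z a - z i)⁻¹) * (w a / (z a - 1) *
      ∏ j ∈ (t.erase i).erase a, 1 / (z a - z j)) by ring]
  rw [mul_inv_cancel₀ hne, one_mul]

lemma helper0 (hz1 : ∀ i, z i ≠ 1) {t : Finset (Fin d)} {j : Fin d} (hj : j ∈ t) :
    (1 - z j) * ∏ j' ∈ t, 1 / (1 - z j') = ∏ j' ∈ t.erase j, 1 / (1 - z j') := by
  rw [← Finset.mul_prod_erase t _ hj, ← mul_assoc]
  have hne : (1 : ℝ) - z j ≠ 0 := sub_ne_zero.2 (Ne.symm (hz1 j))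
  rw [mul_one_div, div_self hne, one_mul]

lemma Gz_step (hinj : Function.Injective z) (hz1 : ∀ i, z i ≠ 1)
    {t : Finset (Fin d)} {i : Fin d} (hi : i ∈ t) (N : ℕ) :
    Gz z t (N + 1) = z i * Gz z t N + Gz z (t.erase i) N := by
  have hsum : ∑ a ∈ t, z a ^ (N + 1) / (z a - 1) * ∏ j ∈ t.erase a, 1 / (z a - z j)
      = z i * ∑ a ∈ t, z a ^ N / (z a - 1) * ∏ j ∈ t.erase a, 1 / (z a - z j)
        + ∑ a ∈ t.erase i, z a ^ N / (z a - 1) * ∏ j ∈ (t.erase i).erase a, 1 / (z a - z j) := by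
    have e1 : ∑ a ∈ t, z a ^ (N + 1) / (z a - 1) * ∏ j ∈ t.erase a, 1 / (z a - z j)
        = ∑ a ∈ t, (z i * (z a ^ N / (z a - 1) * ∏ j ∈ t.erase a, 1 / (z a - z j))
            + (z a - z i) * (z a ^ N / (z a - 1) * ∏ j ∈ t.erase a, 1 / (z a - z j))) := by
      refine Finset.sum_congr rfl fun a ha => ?_
      rw [pow_succ]
      ring
    rw [e1, Finset.sum_add_distrib, ← Finset.mul_sum,
      helper1 hinj hi N (fun a => z a ^ N)]
  have hprod : (1 - z i) * ∏ j ∈ t, 1 / (1 - z j) = ∏ j ∈ t.erase i, 1 / (1 - z j) :=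
    helper0 hz1 hi
  rw [Gz, Gz, Gz, hsum]
  linear_combination hprod

lemma Gz_pair (hinj : Function.Injective z) (hz1 : ∀ i, z i ≠ 1)
    {t : Finset (Fin d)} {i j : Fin d} (hi : i ∈ t) (hj : j ∈ t) :
    (z i - z j) * Gz z t 0 = Gz z (t.erase j) 0 - Gz z (t.erase i) 0 := by
  have e1 := helper1 hinj hj 0 (fun a => z a ^ 0)
  have e2 := helper1 hinj hi 0 (fun a => z a ^ 0)
  have hp1 : (1 - z j) * ∏ j' ∈ t, 1 / (1 - z j') = ∏ j' ∈ t.erase j, 1 / (1 - z j') :=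
    helper0 hz1 hj
  have hp2 : (1 - z i) * ∏ j' ∈ t, 1 / (1 - z j') = ∏ j' ∈ t.erase i, 1 / (1 - z j') :=
    helper0 hz1 hi
  have hsplit : ∑ a ∈ t, (z a - z j) * (z a ^ 0 / (z a - 1) * ∏ j' ∈ t.erase a, 1 / (z a - z j'))
      = ∑ a ∈ t, (z a - z i) * (z a ^ 0 / (z a - 1) * ∏ j' ∈ t.erase a, 1 / (z a - z j'))
        + (z i - z j) * ∑ a ∈ t, z a ^ 0 / (z a - 1) * ∏ j' ∈ t.erase a, 1 / (z a - z j') := by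
    rw [Finset.mul_sum, ← Finset.sum_add_distrib]
    refine Finset.sum_congr rfl fun a ha => ?_
    ring
  rw [Gz, Gz, Gz]
  linear_combination e1 - e2 + hp1 - hp2 - hsplit

lemma Gz_zero (hinj : Function.Injective z) (hz1 : ∀ i, z i ≠ 1) :
    ∀ (n : ℕ) (t : Finset (Fin d)), t.card = n → t.Nonempty → Gz z t 0 = 0 := by
  intro n
  induction n with
  | zero => intro t hcard hne; exact absurd hcard (by simpa using Finset.card_ne_zero_of_mem hne.choose_spec)
  | succ n ihn =>
    intro t hcard hne
    rcases Nat.eq_zero_or_pos n with rfl | hn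
    · -- card = 1
      obtain ⟨i, rfl⟩ := Finset.card_eq_one.1 hcard
      rw [Gz]
      simp only [Finset.prod_singleton, Finset.sum_singleton, Finset.erase_singleton,
        Finset.prod_empty, pow_zero, mul_one]
      have hne1 : (1 : ℝ) - z i ≠ 0 := sub_ne_zero.2 (Ne.symm (hz1 i))
      have hne2 : z i - 1 ≠ 0 := sub_ne_zero.2 (hz1 i)
      field_simp
      ring
    · -- card ≥ 2
      have h2 : 1 < t.card := by omega
      obtain ⟨i, hi, j, hj, hij⟩ := Finset.one_lt_card.1 h2
      have hpair := Gz_pair hinj hz1 hi hj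
      have hzij : z i - z j ≠ 0 := sub_ne_zero.2 fun h => hij (hinj h)
      have hej : Gz z (t.erase j) 0 = 0 := by
        refine ihn (t.erase j) ?_ ?_
        · rw [Finset.card_erase_of_mem hj]; omega
        · rw [← Finset.card_pos, Finset.card_erase_of_mem hj]; omega
      have hei : Gz z (t.erase i) 0 = 0 := by
        refine ihn (t.erase i) ?_ ?_
        · rw [Finset.card_erase_of_mem hi]; omega
        · rw [← Finset.card_pos, Finset.card_erase_of_mem hi]; omega
      rw [hej, hei, sub_zero] at hpair
      exact (mul_eq_zero.1 hpair).resolve_left hzij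

lemma Gz_main (hinj : Function.Injective z) (hz1 : ∀ i, z i ≠ 1) :
    ∀ (N : ℕ) (t : Finset (Fin d)),
      (N < t.card → Gz z t N = 0) ∧ (t.card ≤ N → Gz z t N = Pv z t (N - t.card)) := by
  intro N
  induction N with
  | zero =>
    intro t
    constructor
    · intro h
      exact Gz_zero hinj hz1 t.card t rfl (Finset.card_pos.1 (by omega))
    · intro h
      have ht : t = ∅ := Finset.card_eq_zero.1 (by omega)
      subst ht
      rw [Gz]
      simp only [Finset.prod_empty, Finset.sum_empty, add_zero]
      rw [Pv_empty]
  | succ N ihN =>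
    intro t
    rcases t.eq_empty_or_nonempty with rfl | hne
    · constructor
      · intro h; simp at h
      · intro _
        rw [Gz]
        simp only [Finset.prod_empty, Finset.sum_empty, add_zero]
        rw [Pv_empty]
    · obtain ⟨i, hi⟩ := hne
      have hstep := Gz_step hinj hz1 hi N
      have hce : (t.erase i).card + 1 = t.card := Finset.card_erase_add_one hi
      constructor
      · intro h
        rw [hstep, (ihN t).1 (by omega), (ihN (t.erase i)).1 (by omega)]
        ring
      · intro h
        by_cases heq : t.card = N + 1
        · rw [hstep, (ihN t).1 (by omega), (ihN (t.erase i)).2 (by omega)]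
          rw [show N - (t.erase i).card = 0 by omega, show N + 1 - t.card = 0 by omega]
          rw [Pv, Pv, Finset.sum_range_one, Finset.sum_range_one, Qv_zero, Qv_zero]
          ring
        · -- t.card ≤ N
          have hcN : t.card ≤ N := by omega
          rw [hstep, (ihN t).2 hcN, (ihN (t.erase i)).2 (by omega)]
          rw [show N - (t.erase i).card = (N - t.card) + 1 by omega,
            show N + 1 - t.card = (N - t.card) + 1 by omega]
          have := Pv_cons_succ (z := z) (Finset.notMem_erase i t) (N - t.card)
          rw [consErase hi] at this
          rw [this]

end Alg

section Meas

variable {D : ℕ}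

lemma Gfun_eq {z : Fin D → ℝ} (hinj : Function.Injective z) (hz1 : ∀ i, z i ≠ 1)
    {l : ℕ} (hl : 1 ≤ l) :
    Gfun l z = ∑ n ∈ Finset.range (l - D), Qv z Finset.univ n := by
  have h0 : Gfun l z = Gz z Finset.univ (l - 1) := rfl
  have hcard : (Finset.univ : Finset (Fin D)).card = D := by simp
  rcases lt_or_ge (l - 1) D with h | h
  · rw [h0, (Gz_main hinj hz1 (l - 1) Finset.univ).1 (by omega),
      show l - D = 0 by omega, Finset.range_zero, Finset.sum_empty]
  · rw [h0, (Gz_main hinj hz1 (l - 1) Finset.univ).2 (by omega), Pv, hcard,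
      show l - 1 - D + 1 = l - D by omega]

lemma null_one (i : Fin D) : volume {z : Fin D → ℝ | z i = 1} = 0 := by
  rw [volume_pi]
  exact MeasureTheory.Measure.pi_hyperplane _ i 1

lemma null_pair {i j : Fin D} (hij : i ≠ j) : volume {z : Fin D → ℝ | z i = z j} = 0 := by
  classical
  set L : (Fin D → ℝ) →ₗ[ℝ] ℝ :=
    (LinearMap.proj i : (Fin D → ℝ) →ₗ[ℝ] ℝ) - (LinearMap.proj j : (Fin D → ℝ) →ₗ[ℝ] ℝ) with hL
  have hset : {z : Fin D → ℝ | z i = z j} = (LinearMap.ker L : Set (Fin D → ℝ)) := by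
    ext zz
    simp [hL, LinearMap.mem_ker, sub_eq_zero]
  rw [hset]
  refine MeasureTheory.Measure.addHaar_submodule _ _ ?_
  intro htop
  have hmem : Pi.single i (1 : ℝ) ∈ LinearMap.ker L := htop ▸ Submodule.mem_top
  rw [LinearMap.mem_ker] at hmem
  simp [hL, Pi.single_apply, hij, Ne.symm hij] at hmem

lemma ae_good : ∀ᵐ z : Fin D → ℝ, Function.Injective z ∧ ∀ i, z i ≠ 1 := by
  have h1 : ∀ᵐ z : Fin D → ℝ, ∀ i, z i ≠ 1 := by
    rw [MeasureTheory.ae_all_iff]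
    intro i
    rw [MeasureTheory.ae_iff]
    simpa using null_one i
  have h2 : ∀ᵐ z : Fin D → ℝ, ∀ i j : Fin D, i ≠ j → z i ≠ z j := by
    rw [MeasureTheory.ae_all_iff]
    intro i
    rw [MeasureTheory.ae_all_iff]
    intro j
    by_cases hij : i = j
    · exact Filter.Eventually.of_forall fun z h => absurd hij h
    · rw [MeasureTheory.ae_iff]
      have : {z : Fin D → ℝ | ¬(i ≠ j → z i ≠ z j)} = {z : Fin D → ℝ | z i = z j} := by
        ext zz; simp [hij]
      rw [this]
      exact null_pair hij
  filter_upwards [h1, h2] with z hz1 hz2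
  refine ⟨fun a b hab => ?_, hz1⟩
  by_contra hne
  exact hz2 a b hne hab

lemma integrableOn_cube {f : (Fin D → ℝ) → ℝ} (hf : Continuous f) :
    IntegrableOn f (Set.univ.pi fun _ : Fin D => Set.Icc (0 : ℝ) 1) :=
  hf.continuousOn.integrableOn_compact (isCompact_univ_pi fun _ => isCompact_Icc)

lemma integral_monomial (c : Fin D → ℕ) :
    ∫ z in Set.univ.pi (fun _ : Fin D => Set.Icc (0 : ℝ) 1), ∏ j ∈ Finset.univ, z j ^ c j
      = ∏ j ∈ (Finset.univ : Finset (Fin D)), (1 : ℝ) / ((c j : ℝ) + 1) := by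
  have hmeas : MeasurableSet (Set.univ.pi fun _ : Fin D => Set.Icc (0 : ℝ) 1) :=
    MeasurableSet.univ_pi fun _ => measurableSet_Icc
  rw [← MeasureTheory.integral_indicator hmeas]
  have hpt : (Set.univ.pi fun _ : Fin D => Set.Icc (0 : ℝ) 1).indicator
        (fun z : Fin D → ℝ => ∏ j ∈ Finset.univ, z j ^ c j)
      = fun z : Fin D → ℝ =>
        ∏ j ∈ Finset.univ, (Set.Icc (0 : ℝ) 1).indicator (fun x => x ^ c j) (z j) := by
    funext zz
    by_cases hz : zz ∈ Set.univ.pi fun _ : Fin D => Set.Icc (0 : ℝ) 1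
    · rw [Set.indicator_of_mem hz]
      exact Finset.prod_congr rfl fun j _ =>
        (Set.indicator_of_mem (hz j (Set.mem_univ j)) _).symm
    · rw [Set.indicator_of_notMem hz]
      obtain ⟨j, hj⟩ : ∃ j, zz j ∉ Set.Icc (0 : ℝ) 1 := by
        by_contra h
        push_neg at h
        exact hz fun j _ => h j
      symm
      exact Finset.prod_eq_zero (Finset.mem_univ j) (Set.indicator_of_notMem hj _)
  rw [hpt]
  simp only [volume_pi]
  rw [MeasureTheory.integral_fintype_prod_eq_prod (ι := Fin D)
    (fun j (x : ℝ) => (Set.Icc (0 : ℝ) 1).indicator (fun y => y ^ c j) x)]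
  refine Finset.prod_congr rfl fun j _ => ?_
  rw [MeasureTheory.integral_indicator measurableSet_Icc,
    MeasureTheory.integral_Icc_eq_integral_Ioc,
    ← intervalIntegral.integral_of_le (zero_le_one (α := ℝ)), integral_pow]
  have : (c j : ℝ) + 1 ≠ 0 := by positivity
  rw [one_pow, zero_pow (by omega : c j + 1 ≠ 0)]
  push_cast
  ring

lemma integral_Qv (n : ℕ) :
    ∫ z in Set.univ.pi (fun _ : Fin D => Set.Icc (0 : ℝ) 1), Qv z Finset.univ n
      = Av (Finset.univ : Finset (Fin D)) n := by
  have hint : ∀ c ∈ (Finset.univ : Finset (Fin D)).piAntidiag n,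
      IntegrableOn (fun z : Fin D → ℝ => ∏ j ∈ Finset.univ, z j ^ c j)
        (Set.univ.pi fun _ : Fin D => Set.Icc (0 : ℝ) 1) := by
    intro c _
    exact integrableOn_cube
      (continuous_finset_prod _ fun j _ => (continuous_apply j).pow _)
  have : ∫ z in Set.univ.pi (fun _ : Fin D => Set.Icc (0 : ℝ) 1), Qv z Finset.univ n
      = ∑ c ∈ (Finset.univ : Finset (Fin D)).piAntidiag n,
          ∫ z in Set.univ.pi (fun _ : Fin D => Set.Icc (0 : ℝ) 1),
            ∏ j ∈ Finset.univ, z j ^ c j := by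
    rw [show (fun z : Fin D → ℝ => Qv z Finset.univ n)
        = fun z : Fin D → ℝ => ∑ c ∈ (Finset.univ : Finset (Fin D)).piAntidiag n,
            ∏ j ∈ Finset.univ, z j ^ c j from rfl]
    exact MeasureTheory.integral_finset_sum _ hint
  rw [this, Av, MM]
  exact Finset.sum_congr rfl fun c _ => integral_monomial c

end Meas

theorem stirling1_integral (l k : ℕ) (hl : 1 ≤ l) (hk : 2 ≤ k) :
    (stirling1 l k : ℝ) / (l - 1).factorial =
      (1 / (k - 1).factorial : ℝ) *
        ∫ z in Set.univ.pi (fun _ : Fin (k - 1) => Set.Icc (0 : ℝ) 1), Gfun l z := by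
  obtain ⟨m, rfl⟩ : ∃ m, k = m + 2 := ⟨k - 2, by omega⟩
  simp only [show m + 2 - 1 = m + 1 from rfl]
  set D := m + 1 with hD
  -- compute the integral
  have hIeq : ∫ z in Set.univ.pi (fun _ : Fin D => Set.Icc (0 : ℝ) 1), Gfun l z
      = ∑ n ∈ Finset.range (l - D), Av (Finset.univ : Finset (Fin D)) n := by
    have hcongr : ∫ z in Set.univ.pi (fun _ : Fin D => Set.Icc (0 : ℝ) 1), Gfun l z
        = ∫ z in Set.univ.pi (fun _ : Fin D => Set.Icc (0 : ℝ) 1),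
            ∑ n ∈ Finset.range (l - D), Qv z Finset.univ n := by
      refine MeasureTheory.integral_congr_ae ?_
      filter_upwards [MeasureTheory.ae_restrict_of_ae ae_good] with z hz
      exact Gfun_eq hz.1 hz.2 hl
    rw [hcongr]
    rw [MeasureTheory.integral_finset_sum]
    · exact Finset.sum_congr rfl fun n _ => integral_Qv n
    · intro n _
      refine integrableOn_cube ?_
      unfold Qv MM
      exact continuous_finset_sum _ fun c _ =>
        continuous_finset_prod _ fun j _ => (continuous_apply j).pow _
  have hcard : (Finset.univ : Finset (Fin D)).card = D := by simp
  have hcomb := comb_main l hl (Finset.univ : Finset (Fin D))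
  rw [hcard] at hcomb
  have hBv : Bv (Finset.univ : Finset (Fin D)) (l - D)
      = ∑ n ∈ Finset.range (l - D), Av (Finset.univ : Finset (Fin D)) n := rfl
  rw [hBv] at hcomb
  show (stirling1 l (m + 2) : ℝ) / ((l - 1).factorial : ℝ)
      = (1 / (D.factorial : ℝ)) *
        ∫ z in Set.univ.pi (fun _ : Fin D => Set.Icc (0 : ℝ) 1), Gfun l z
  rw [hIeq]
  have h1 : ((l - 1).factorial : ℝ) ≠ 0 := Nat.cast_ne_zero.2 (Nat.factorial_ne_zero _)
  have h2 : ((D).factorial : ℝ) ≠ 0 := Nat.cast_ne_zero.2 (Nat.factorial_ne_zero _)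
  have hDk : D + 1 = m + 2 := rfl
  rw [hDk] at hcomb
  refine mul_left_cancel₀ h2 ?_
  rw [← mul_assoc, mul_one_div, div_self h2, one_mul, mul_div_assoc', div_eq_iff h1]
  linear_combination -hcomb
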